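/- arXiv:2505.05795 — 3 statements merged into one kernel-verified Lean document; each statement's English description precedes it below -/
import Mathlib

section
/- (Theorem 2, per-agent form) Let n ≥ 1 and let r₁, …, rₙ ∈ ℝ³ be nominal positions with centroid r_c = (1/n) Σᵢ rᵢ. Let ζ ∈ ℝ³ be a unit vector and for each ordered pair (i, j) let w_{ij} = a_{ij} I₃ + b_{ij} ζζᵀ + c_{ij} ζ^× be weight matrices satisfying, for every agent i, Σ_{j ∈ 𝒩ᵢ} w_{ij}(r_j − r_i) = 0, where 𝒩ᵢ is the neighbor set of i. For any T ∈ ℝ³, k ∈ ℝ, and θ ∈ ℝ, define the target positions p*ᵢ = (r_c + T) + k R_ζ (rᵢ − r_c), where R_ζ = I₃ + (sin θ) ζ^× + (1 − cos θ)(ζ^×)². Then for every agent i, Σ_{j ∈ 𝒩ᵢ} w_{ij}(p*_j − p*_i) = 0. -/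
open Matrix

/-- The skew-symmetric cross-product matrix of a vector in R^3. -/
def skewMat (ζ : Fin 3 → ℝ) : Matrix (Fin 3) (Fin 3) ℝ :=
  !![0, -ζ 2, ζ 1;
     ζ 2, 0, -ζ 0;
     -ζ 1, ζ 0, 0]

/-- The outer-product matrix of a vector in R^3. -/
def outerMat (ζ : Fin 3 → ℝ) : Matrix (Fin 3) (Fin 3) ℝ :=
  Matrix.vecMulVec ζ ζ

/-- The Rodrigues rotation matrix by angle θ about the axis ζ. -/
noncomputable def rodrigues (ζ : Fin 3 → ℝ) (θ : ℝ) : Matrix (Fin 3) (Fin 3) ℝ :=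
  1 + Real.sin θ • skewMat ζ + (1 - Real.cos θ) • (skewMat ζ) ^ 2

lemma weight_comm (ζ : Fin 3 → ℝ) (a b c θ : ℝ) :
    (a • (1 : Matrix (Fin 3) (Fin 3) ℝ) + b • outerMat ζ + c • skewMat ζ) * rodrigues ζ θ
      = rodrigues ζ θ * (a • (1 : Matrix (Fin 3) (Fin 3) ℝ) + b • outerMat ζ + c • skewMat ζ) := by
  ext i j
  fin_cases i <;> fin_cases j <;>
    simp [rodrigues, skewMat, outerMat, Matrix.vecMulVec, Matrix.mul_apply,
      Matrix.one_apply, pow_two, Fin.sum_univ_three] <;> ring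

/-- Theorem 2 (per-agent form): if augmented-Laplacian weights annihilate the
relative nominal positions, they also annihilate the relative target positions
obtained by translation, uniform scaling, and rotation about the unit axis ζ
applied about the centroid. -/
theorem target_formation_similar
    (n : ℕ) (hn : 1 ≤ n) (r : Fin n → Fin 3 → ℝ)
    (ζ : Fin 3 → ℝ) (hζ : ζ ⬝ᵥ ζ = 1)
    (N : Fin n → Finset (Fin n))
    (a b c : Fin n → Fin n → ℝ)
    (w : Fin n → Fin n → Matrix (Fin 3) (Fin 3) ℝ)
    (hw : ∀ i j, w i j =
      a i j • (1 : Matrix (Fin 3) (Fin 3) ℝ) + b i j • outerMat ζ + c i j • skewMat ζ)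
    (hconstraint : ∀ i, ∑ j ∈ N i, (w i j) *ᵥ (r j - r i) = 0)
    (T : Fin 3 → ℝ) (k θ : ℝ)
    (rc : Fin 3 → ℝ) (hrc : rc = (n : ℝ)⁻¹ • ∑ i, r i)
    (p : Fin n → Fin 3 → ℝ)
    (hp : ∀ i, p i = (rc + T) + k • (rodrigues ζ θ *ᵥ (r i - rc))) :
    ∀ i, ∑ j ∈ N i, (w i j) *ᵥ (p j - p i) = 0 := by
  intro i
  have pdiff : ∀ j, p j - p i = k • (rodrigues ζ θ *ᵥ (r j - r i)) := by
    intro j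
    simp only [hp, Matrix.mulVec_sub, smul_sub]
    abel
  have comm : ∀ j, w i j * rodrigues ζ θ = rodrigues ζ θ * w i j := by
    intro j; rw [hw i j]; exact weight_comm ζ _ _ _ θ
  calc ∑ j ∈ N i, (w i j) *ᵥ (p j - p i)
      = ∑ j ∈ N i, k • (rodrigues ζ θ *ᵥ ((w i j) *ᵥ (r j - r i))) := by
        refine Finset.sum_congr rfl fun j _ => ?_
        rw [pdiff j, Matrix.mulVec_smul, Matrix.mulVec_mulVec, Matrix.mulVec_mulVec,
          comm j]
    _ = k • (rodrigues ζ θ *ᵥ ∑ j ∈ N i, (w i j) *ᵥ (r j - r i)) := by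
        simp only [← Matrix.mulVecLin_apply]
        rw [← Finset.smul_sum, ← map_sum]
    _ = 0 := by rw [hconstraint i, Matrix.mulVec_zero, smul_zero]
end

section
/- (Lemma 2) Let W_ff be an invertible real m × m matrix, W_fl a real m × k matrix, α > 0, and let p_f : ℝ → ℝ^m and p_l : ℝ → ℝ^k be differentiable trajectories satisfying W_ff p_f′(t) + W_fl p_l′(t) = −α (W_ff p_f(t) + W_fl p_l(t)) for all t ≥ 0. Then the tracking error e_f(t) = p_f(t) + W_ff⁻¹ W_fl p_l(t) satisfies e_f(t) = e^{−α t} e_f(0) for all t ≥ 0, and consequently p_f(t) + W_ff⁻¹ W_fl p_l(t) → 0 as t → ∞. -/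
open Matrix Filter

/-- Lemma 2: under the follower control protocol, the tracking error decays
exponentially, `e_f(t) = e^{-α t} e_f(0)` for `t ≥ 0`, and hence tends to 0. -/
theorem follower_error_converges
    (m k : ℕ)
    (Wff : Matrix (Fin m) (Fin m) ℝ) (hWff : IsUnit Wff.det)
    (Wfl : Matrix (Fin m) (Fin k) ℝ)
    (α : ℝ) (hα : 0 < α)
    (pf : ℝ → Fin m → ℝ) (pl : ℝ → Fin k → ℝ)
    (hpf : Differentiable ℝ pf) (hpl : Differentiable ℝ pl)
    (hprotocol : ∀ t : ℝ, 0 ≤ t →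
      Wff *ᵥ deriv pf t + Wfl *ᵥ deriv pl t
        = -α • (Wff *ᵥ pf t + Wfl *ᵥ pl t)) :
    (∀ t : ℝ, 0 ≤ t →
      pf t + (Wff⁻¹ * Wfl) *ᵥ pl t
        = Real.exp (-α * t) • (pf 0 + (Wff⁻¹ * Wfl) *ᵥ pl 0)) ∧
    Tendsto (fun t => pf t + (Wff⁻¹ * Wfl) *ᵥ pl t) atTop (nhds 0) := by
  set A := Wff⁻¹ * Wfl with hA
  set e : ℝ → Fin m → ℝ := fun t => pf t + A *ᵥ pl t with he
  let L : (Fin k → ℝ) →L[ℝ] (Fin m → ℝ) :=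
    LinearMap.toContinuousLinearMap (Matrix.mulVecLin A)
  have hL : ∀ v, L v = A *ᵥ v := fun v => rfl
  -- derivative of e
  have heD : ∀ t : ℝ, HasDerivAt e (deriv pf t + A *ᵥ deriv pl t) t := by
    intro t
    have h1 : HasDerivAt pf (deriv pf t) t := (hpf t).hasDerivAt
    have h2 : HasDerivAt (fun t => L (pl t)) (L (deriv pl t)) t :=
      L.hasFDerivAt.comp_hasDerivAt t (hpl t).hasDerivAt
    have h3 := h1.add h2
    simp only [hL] at h3
    exact h3
  -- protocol rewritten
  have hkey : ∀ t : ℝ, 0 ≤ t → deriv pf t + A *ᵥ deriv pl t = -α • e t := by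
    intro t ht
    have h := congrArg (fun v => Wff⁻¹ *ᵥ v) (hprotocol t ht)
    simpa [Matrix.mulVec_add, Matrix.mulVec_mulVec, Matrix.nonsing_inv_mul _ hWff,
      Matrix.one_mulVec, Matrix.mulVec_smul, Matrix.mulVec_neg, he, hA] using h
  -- coordinatewise exponential decay
  have hcoord : ∀ t : ℝ, 0 ≤ t → ∀ i, e t i = Real.exp (-α * t) * e 0 i := by
    intro t ht i
    set f : ℝ → ℝ := fun s => e s i with hf
    have hfD : ∀ s : ℝ, HasDerivAt f (deriv pf s i + (A *ᵥ deriv pl s) i) s := by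
      intro s
      exact (ContinuousLinearMap.proj (R := ℝ) (φ := fun _ : Fin m => ℝ)
        i).hasFDerivAt.comp_hasDerivAt s (heD s)
    have hfD' : ∀ s : ℝ, 0 ≤ s → HasDerivAt f (-α * f s) s := by
      intro s hs
      have := hfD s
      rw [show deriv pf s i + (A *ᵥ deriv pl s) i = ((deriv pf s + A *ᵥ deriv pl s) : Fin m → ℝ) i from rfl,
        hkey s hs] at this
      simpa [hf] using this
    set g : ℝ → ℝ := fun s => Real.exp (α * s) * f s with hg
    have hgD : ∀ s : ℝ, 0 ≤ s → HasDerivAt g 0 s := by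
      intro s hs
      have hexp : HasDerivAt (fun x : ℝ => Real.exp (α * x)) (α * Real.exp (α * s)) s := by
        have := (Real.hasDerivAt_exp (α * s)).comp s ((hasDerivAt_id s).const_mul α)
        simpa [mul_comm, Function.comp_def] using this
      have h2 : HasDerivAt g (α * Real.exp (α * s) * f s + Real.exp (α * s) * (-α * f s)) s :=
        hexp.mul (hfD' s hs)
      convert h2 using 1
      ring
    have hconst : g t = g 0 := by
      rcases eq_or_lt_of_le ht with h | h
      · rw [← h]
      · have hdiff : DifferentiableOn ℝ g (Set.Icc 0 t) := fun x hx =>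
          ((hgD x hx.1).differentiableAt).differentiableWithinAt
        have hderiv : ∀ x ∈ Set.Ico (0:ℝ) t, derivWithin g (Set.Icc 0 t) x = 0 := by
          intro x hx
          have hxI : x ∈ Set.Icc (0:ℝ) t := ⟨hx.1, hx.2.le⟩
          rw [(hgD x hx.1).differentiableAt.derivWithin ((uniqueDiffOn_Icc h) x hxI)]
          exact (hgD x hx.1).deriv
        exact constant_of_derivWithin_zero hdiff hderiv t (by exact ⟨ht, le_rfl⟩)
    have hft : Real.exp (α * t) * f t = f 0 := by simpa [hg] using hconst
    calc e t i = Real.exp (-α * t) * (Real.exp (α * t) * f t) := by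
          rw [← mul_assoc, ← Real.exp_add, neg_mul, neg_add_cancel, Real.exp_zero, one_mul]
      _ = Real.exp (-α * t) * e 0 i := by rw [hft]
  have hmain : ∀ t : ℝ, 0 ≤ t →
      pf t + A *ᵥ pl t = Real.exp (-α * t) • (pf 0 + A *ᵥ pl 0) := by
    intro t ht
    funext i
    simpa [Pi.smul_apply, smul_eq_mul, he] using hcoord t ht i
  refine ⟨hmain, ?_⟩
  have h1 : Tendsto (fun t : ℝ => -α * t) atTop atBot := by
    have h := tendsto_id.const_mul_atTop hα
    simpa [Function.comp_def, neg_mul] using tendsto_neg_atTop_atBot.comp h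
  have hexp : Tendsto (fun t : ℝ => Real.exp (-α * t)) atTop (nhds 0) :=
    Real.tendsto_exp_atBot.comp h1
  have h2 : Tendsto (fun t : ℝ => Real.exp (-α * t) • (pf 0 + A *ᵥ pl 0)) atTop
      (nhds (0 : Fin m → ℝ)) := by
    simpa using hexp.smul_const (pf 0 + A *ᵥ pl 0)
  refine h2.congr' ?_
  filter_upwards [eventually_ge_atTop (0:ℝ)] with t ht
  exact (hmain t ht).symm
end

section
/- (Theorem 4) Let d, n_f, n_l ≥ 1, n = n_f + n_l, and let W ∈ ℝ^{nd × nd} be block-partitioned as W = [[W_ff, W_fl], [W_lf, W_ll]] with invertible follower–follower block W_ff ∈ ℝ^{n_f d × n_f d}. Suppose the original configuration p = (p_f, p_l) ∈ ℝ^{nd} satisfies W p = 0. A new agent joins at position p_add ∈ ℝ^d, giving the extended configuration p′ = (p_add, p′_o) ∈ ℝ^{(n+1)d} with p′_o = (p′_{of}, p′_{ol}), and the reconstructed constraint matrix is W′ = W_ex + ΔW, where W_ex = [[0_{d×d}, 0_{d×nd}], [0_{nd×d}, W]]. If W′ p′ = 0, ΔW p′ = 0, and the leaders' positions are unchanged (p′_{ol}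 = p_l), then the entire original configuration is unchanged: p′_o = p (in particular p′_{of} = p_f = −W_ff⁻¹ W_fl p_l). -/
open Matrix

/-- Theorem 4 (dynamic agent reconfiguration): if a new agent joins the
formation, the constraint matrix is extended by zero-padding to `Wex` and
corrected by `ΔW`, and the new constraint matrix `W' = Wex + ΔW` annihilates
the extended configuration while `ΔW` also annihilates it, then provided the
leaders' positions are unchanged, the entire original configuration is
unchanged (in particular the original followers stay at
`p_f = -Wff⁻¹ Wfl p_l`). -/
theorem dynamic_agent_reconfiguration
    (d nf nl : ℕ) (hd : 1 ≤ d) (hnf : 1 ≤ nf) (hnl : 1 ≤ nl)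
    (Wff : Matrix (Fin (nf * d)) (Fin (nf * d)) ℝ)
    (Wfl : Matrix (Fin (nf * d)) (Fin (nl * d)) ℝ)
    (Wlf : Matrix (Fin (nl * d)) (Fin (nf * d)) ℝ)
    (Wll : Matrix (Fin (nl * d)) (Fin (nl * d)) ℝ)
    (hWff : IsUnit Wff.det)
    (W : Matrix (Fin (nf * d) ⊕ Fin (nl * d)) (Fin (nf * d) ⊕ Fin (nl * d)) ℝ)
    (hW : W = Matrix.fromBlocks Wff Wfl Wlf Wll)
    (pf : Fin (nf * d) → ℝ) (pl : Fin (nl * d) → ℝ)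
    (hWp : W *ᵥ Sum.elim pf pl = 0)
    (padd : Fin d → ℝ)
    (pof : Fin (nf * d) → ℝ) (pol : Fin (nl * d) → ℝ)
    (Wex ΔW W' : Matrix (Fin d ⊕ (Fin (nf * d) ⊕ Fin (nl * d)))
      (Fin d ⊕ (Fin (nf * d) ⊕ Fin (nl * d))) ℝ)
    (hWex : Wex = Matrix.fromBlocks 0 0 0 W)
    (hW' : W' = Wex + ΔW)
    (hW'p' : W' *ᵥ Sum.elim padd (Sum.elim pof pol) = 0)
    (hΔWp' : ΔW *ᵥ Sum.elim padd (Sum.elim pof pol) = 0)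
    (hleaders : pol = pl) :
    Sum.elim pof pol = Sum.elim pf pl ∧ pof = pf ∧
      pf = -((Wff⁻¹ * Wfl) *ᵥ pl) := by

  subst hW hWex hW' hleaders
  -- Wex annihilates p'
  have hWexp : (Matrix.fromBlocks (0 : Matrix (Fin d) (Fin d) ℝ) 0 0
      (Matrix.fromBlocks Wff Wfl Wlf Wll)) *ᵥ Sum.elim padd (Sum.elim pof pol) = 0 := by
    have := hW'p'
    rw [Matrix.add_mulVec, hΔWp', add_zero] at this
    exact this
  have hWpo : (Matrix.fromBlocks Wff Wfl Wlf Wll) *ᵥ Sum.elim pof pol = 0 := by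
    have h := hWexp
    rw [Matrix.fromBlocks_mulVec] at h
    simp only [Matrix.zero_mulVec, zero_add, add_zero] at h
    funext i
    simpa using congrFun h (Sum.inr i)
  -- extract follower equations
  have hf1 : Wff *ᵥ pf + Wfl *ᵥ pol = 0 := by
    funext i
    have := congrFun hWp (Sum.inl i)
    simpa [Matrix.fromBlocks_mulVec] using this
  have hf2 : Wff *ᵥ pof + Wfl *ᵥ pol = 0 := by
    funext i
    have := congrFun hWpo (Sum.inl i)
    simpa [Matrix.fromBlocks_mulVec] using this
  have hinv : Wff⁻¹ * Wff = 1 := Matrix.nonsing_inv_mul _ hWff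
  have key : ∀ x : Fin (nf * d) → ℝ, Wff *ᵥ x + Wfl *ᵥ pol = 0 →
      x = -((Wff⁻¹ * Wfl) *ᵥ pol) := by
    intro x hx
    have : Wff *ᵥ x = -(Wfl *ᵥ pol) := by
      have := congrArg (· - Wfl *ᵥ pol) hx
      simpa [add_sub_cancel_right, sub_eq_iff_eq_add] using eq_neg_of_add_eq_zero_left hx
    calc x = (Wff⁻¹ * Wff) *ᵥ x := by rw [hinv, Matrix.one_mulVec]
      _ = Wff⁻¹ *ᵥ (Wff *ᵥ x) := by rw [Matrix.mulVec_mulVec]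
      _ = Wff⁻¹ *ᵥ -(Wfl *ᵥ pol) := by rw [this]
      _ = -((Wff⁻¹ * Wfl) *ᵥ pol) := by
          rw [Matrix.mulVec_neg, Matrix.mulVec_mulVec]
  have h1 := key pf hf1
  have h2 := key pof hf2
  have hpof : pof = pf := h2.trans h1.symm
  exact ⟨by rw [hpof], hpof, h1⟩
end
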